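/- If v ∈ ℝ is nonzero, then the spectrum σ(H) = {E ∈ ℝ : Δ_L(E) ∈ [-2, 2]} of the discrete Schrödinger operator with sparse L-periodic potential consists of exactly L disjoint nonempty closed intervals. -/

import Mathlib

open Polynomial

noncomputable def sparseDiscriminantReal (L : ℕ) (v : ℝ) (E : ℝ) : ℝ :=
  2 * (Polynomial.Chebyshev.T ℝ L).eval (E / 2)
    - v * (Polynomial.Chebyshev.U ℝ (L - 1)).eval (E / 2)

namespace SparseBandsAux

open Polynomial.Chebyshev Filter Real

/-! ### Generic helpers -/

lemma chain_dec {f : ℕ → ℝ} {n : ℕ} (h : ∀ m, m + 1 ≤ n → f (m + 1) < f m) :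
    ∀ i j, i < j → j ≤ n → f j < f i := by
  intro i j hij hjn
  induction j with
  | zero => omega
  | succ j ih =>
    rcases Nat.lt_or_ge i j with h' | h'
    · exact (h j hjn).trans (ih h' (by omega))
    · have hij' : i = j := by omega
      subst hij'
      exact h i hjn

lemma prod_pair (g : ℕ → ℝ) (n : ℕ) :
    ∏ i ∈ Finset.range (2 * n), g i = ∏ m ∈ Finset.range n, (g (2 * m) * g (2 * m + 1)) := by
  induction n with
  | zero => simp
  | succ n ih =>
    have h2 : 2 * (n + 1) = 2 * n + 1 + 1 := by ring
    rw [h2, Finset.prod_range_succ, Finset.prod_range_succ, ih, Finset.prod_range_succ,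
      mul_assoc]

lemma sub_deg {p q : ℝ[X]} (h : q.degree < p.degree) :
    (p - q).natDegree = p.natDegree ∧ (p - q).leadingCoeff = p.leadingCoeff := by
  rw [sub_eq_add_neg]
  have h' : (-q).degree < p.degree := by rwa [degree_neg]
  exact ⟨natDegree_eq_of_degree_eq (degree_add_eq_left_of_degree_lt h'),
    leadingCoeff_add_of_degree_lt' h'⟩

lemma sub_deg_nat {p q : ℝ[X]} (hp0 : p ≠ 0) (h : q.natDegree < p.natDegree) :
    (p - q).natDegree = p.natDegree ∧ (p - q).leadingCoeff = p.leadingCoeff := by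
  apply sub_deg
  calc q.degree ≤ (q.natDegree : WithBot ℕ) := degree_le_natDegree
  _ < (p.natDegree : WithBot ℕ) := by exact_mod_cast h
  _ = p.degree := (degree_eq_natDegree hp0).symm

lemma evT {p : ℝ[X]} (h1 : 0 < p.natDegree) (h2 : 0 < p.leadingCoeff) :
    ∀ᶠ x in atTop, 0 < p.eval x :=
  (p.tendsto_atTop_of_leadingCoeff_nonneg (natDegree_pos_iff_degree_pos.mp h1)
    h2.le).eventually_gt_atTop 0

lemma evB {p : ℝ[X]} (h1 : 0 < p.natDegree) (h2 : 0 < p.leadingCoeff) :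
    ∀ᶠ x in atBot, 0 < (-1) ^ p.natDegree * p.eval x := by
  have hp0 : p ≠ 0 := leadingCoeff_ne_zero.mp h2.ne'
  set q : ℝ[X] := C ((-1) ^ p.natDegree) * p.comp (-X) with hq
  have hXdeg : (-X : ℝ[X]).natDegree = 1 := by
    rw [natDegree_neg, natDegree_X]
  have hone : ((-1 : ℝ) ^ p.natDegree) ≠ 0 := pow_ne_zero _ (by norm_num)
  have hcompdeg : (p.comp (-X)).natDegree = p.natDegree := by
    rw [natDegree_comp, hXdeg, mul_one]
  have hcomplc : (p.comp (-X)).leadingCoeff = p.leadingCoeff * (-1) ^ p.natDegree := by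
    rw [leadingCoeff_comp (by rw [hXdeg]; omega)]
    congr 1
    rw [leadingCoeff_neg, leadingCoeff_X]
  have hqdeg : q.natDegree = p.natDegree := by
    rw [hq, natDegree_C_mul hone, hcompdeg]
  have hsq : ((-1:ℝ) ^ p.natDegree) * ((-1:ℝ) ^ p.natDegree) = 1 := by
    rw [← pow_add, ← two_mul, pow_mul]
    norm_num
  have hqlc : q.leadingCoeff = p.leadingCoeff := by
    rw [hq, leadingCoeff_mul, leadingCoeff_C, hcomplc]
    calc (-1:ℝ) ^ p.natDegree * (p.leadingCoeff * (-1) ^ p.natDegree)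
        = ((-1:ℝ) ^ p.natDegree * (-1) ^ p.natDegree) * p.leadingCoeff := by ring
    _ = p.leadingCoeff := by rw [hsq, one_mul]
  have hqev : ∀ᶠ x in atTop, 0 < q.eval x := by
    apply evT
    · rw [hqdeg]; exact h1
    · rw [hqlc]; exact h2
  rw [Filter.eventually_atTop] at hqev
  obtain ⟨b, hb⟩ := hqev
  rw [Filter.eventually_atBot]
  refine ⟨-b, fun x hx => ?_⟩
  have hbx := hb (-x) (by linarith)
  have hqx : q.eval (-x) = (-1) ^ p.natDegree * p.eval x := by
    rw [hq, eval_mul, eval_C, eval_comp]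
    simp
  rwa [hqx] at hbx

/-! ### Chebyshev degrees and the Pell identity -/

private lemma two_pol : (2 : ℝ[X]) = C 2 := (map_ofNat Polynomial.C 2).symm

private lemma four_pol : (4 : ℝ[X]) = C 4 := (map_ofNat Polynomial.C 4).symm

lemma rec_deg {p q : ℝ[X]} {n : ℕ} {c : ℝ} (hc : c ≠ 0)
    (hpd : p.natDegree = n + 1) (hplc : p.leadingCoeff = c) (hqd : q.natDegree ≤ n) :
    (2 * X * p - q).natDegree = n + 2 ∧ (2 * X * p - q).leadingCoeff = 2 * c := by
  have hp0 : p ≠ 0 := leadingCoeff_ne_zero.mp (by rw [hplc]; exact hc)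
  have hrw : (2 * X * p : ℝ[X]) = C 2 * (X * p) := by rw [two_pol]; ring
  have hd : (2 * X * p).natDegree = n + 2 := by
    rw [hrw, natDegree_C_mul (two_ne_zero), natDegree_mul X_ne_zero hp0, natDegree_X, hpd]
    omega
  have hlc : (2 * X * p).leadingCoeff = 2 * c := by
    rw [hrw, leadingCoeff_mul, leadingCoeff_C, leadingCoeff_mul, leadingCoeff_X, hplc, one_mul]
  have h0 : (2 * X * p : ℝ[X]) ≠ 0 := by
    intro h
    rw [h] at hlc
    simp only [leadingCoeff_zero] at hlc
    exact hc (by linarith [hlc.symm] : c = 0)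
  have hlt : q.natDegree < (2 * X * p).natDegree := by rw [hd]; omega
  obtain ⟨h1, h2⟩ := sub_deg_nat h0 hlt
  exact ⟨by rw [h1, hd], by rw [h2, hlc]⟩

lemma U_deg (n : ℕ) :
    (U ℝ (n : ℤ)).natDegree = n ∧ (U ℝ (n : ℤ)).leadingCoeff = 2 ^ n := by
  suffices H : ∀ m : ℕ, ((U ℝ (m : ℤ)).natDegree = m ∧ (U ℝ (m : ℤ)).leadingCoeff = 2 ^ m) ∧
      ((U ℝ ((m + 1 : ℕ) : ℤ)).natDegree = m + 1 ∧
        (U ℝ ((m + 1 : ℕ) : ℤ)).leadingCoeff = 2 ^ (m + 1)) by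
    exact (H n).1
  intro m
  induction m with
  | zero =>
    constructor
    · simp
    · have h1 : U ℝ ((0 + 1 : ℕ) : ℤ) = 2 * X := by norm_num
      rw [h1]
      constructor
      · rw [two_pol, natDegree_C_mul (two_ne_zero), natDegree_X]
      · rw [two_pol, leadingCoeff_mul, leadingCoeff_C, leadingCoeff_X]; norm_num
  | succ m ih =>
    refine ⟨ih.2, ?_⟩
    have e1 : ((m + 1 + 1 : ℕ) : ℤ) = (m : ℤ) + 2 := by push_cast; ring
    have e2 : ((m + 1 : ℕ) : ℤ) = (m : ℤ) + 1 := by push_cast; ring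
    have hrec : U ℝ ((m + 1 + 1 : ℕ) : ℤ) = 2 * X * U ℝ ((m + 1 : ℕ) : ℤ) - U ℝ (m : ℤ) := by
      rw [e2, e1]
      exact U_add_two ℝ (m : ℤ)
    rw [hrec]
    have hstep := rec_deg (c := (2 : ℝ) ^ (m + 1)) (by positivity) ih.2.1 ih.2.2
      (le_of_eq ih.1.1)
    refine ⟨hstep.1, ?_⟩
    rw [hstep.2]; ring

lemma T_deg (n : ℕ) :
    (T ℝ ((n : ℤ) + 1)).natDegree = n + 1 ∧ (T ℝ ((n : ℤ) + 1)).leadingCoeff = 2 ^ n := by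
  suffices H : ∀ m : ℕ, (T ℝ (m : ℤ)).natDegree ≤ m ∧
      ((T ℝ ((m : ℤ) + 1)).natDegree = m + 1 ∧ (T ℝ ((m : ℤ) + 1)).leadingCoeff = 2 ^ m) by
    exact (H n).2
  intro m
  induction m with
  | zero =>
    constructor
    · simp
    · rw [show ((0:ℕ) : ℤ) + 1 = (1 : ℤ) by norm_num]
      constructor
      · simp
      · simp
  | succ m ih =>
    have e2 : ((m + 1 : ℕ) : ℤ) = (m : ℤ) + 1 := by push_cast; ring
    constructor
    · rw [e2, ih.2.1]
    · have hrec : T ℝ (((m + 1 : ℕ) : ℤ) + 1) = 2 * X * T ℝ ((m : ℤ) + 1) - T ℝ (m : ℤ) := by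
        rw [e2, show (m : ℤ) + 1 + 1 = (m : ℤ) + 2 by ring]
        exact T_add_two ℝ (m : ℤ)
      rw [hrec]
      have hstep := rec_deg (c := (2 : ℝ) ^ m) (by positivity) ih.2.1 ih.2.2 ih.1
      refine ⟨hstep.1, ?_⟩
      rw [hstep.2]; ring

lemma pell (n : ℕ) :
    (T ℝ ((n : ℤ) + 1)) ^ 2 - (X ^ 2 - 1) * (U ℝ (n : ℤ)) ^ 2 = 1 := by
  induction n with
  | zero =>
    norm_num
  | succ n ih =>
    have e2 : ((n + 1 : ℕ) : ℤ) = (n : ℤ) + 1 := by push_cast; ring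
    rw [e2, show (n : ℤ) + 1 + 1 = (n : ℤ) + 2 by ring]
    have h₁ := T_eq_X_mul_T_sub_pol_U ℝ (n : ℤ)
    have h₂ := U_eq_X_mul_U_add_T ℝ (n : ℤ)
    linear_combination (T ℝ ((n : ℤ) + 2) + X * T ℝ ((n : ℤ) + 1) + (X ^ 2 - 1) * U ℝ (n : ℤ)) * h₁
      - (X ^ 2 - 1) * (U ℝ ((n : ℤ) + 1) + X * U ℝ (n : ℤ) + T ℝ ((n : ℤ) + 1)) * h₂ + ih

/-! ### The core argument: a polynomial with positive leading coefficient, degree `2(n+1)`,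
and `2(n+1)` distinct real zeros has `{x | p x ≤ 0}` a union of `n+1` disjoint intervals. -/

lemma core {n : ℕ} {P : ℝ[X]} {c : ℝ} (hc : 0 < c)
    (hdeg : P.natDegree = 2 * (n + 1)) (hlc : P.leadingCoeff = c)
    (F : Finset ℝ) (hF : F.card = 2 * (n + 1)) (hz : ∀ x ∈ F, P.eval x = 0) :
    ∃ γ β : Fin (n + 1) → ℝ, (∀ i, γ i ≤ β i) ∧ (∀ i j, i < j → β i < γ j) ∧
      ∀ w : ℝ, (P.eval w ≤ 0 ↔ ∃ i : Fin (n + 1), γ i ≤ w ∧ w ≤ β i) := by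
  classical
  set N := 2 * (n + 1) with hN
  have hP0 : P ≠ 0 := leadingCoeff_ne_zero.mp (by rw [hlc]; exact hc.ne')
  set e := F.orderEmbOfFin hF with he
  set z : ℕ → ℝ := fun i => if h : i < N then e ⟨i, h⟩ else 0 with hzdef
  have hzmono : ∀ i j, i < j → j < N → z i < z j := by
    intro i j hij hj
    have hi : i < N := hij.trans hj
    simp only [hzdef, dif_pos hj, dif_pos hi]
    exact e.strictMono (show (⟨i, hi⟩ : Fin N) < ⟨j, hj⟩ from hij)
  have hzroot : ∀ i, i < N → P.eval (z i) = 0 := by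
    intro i h
    simp only [hzdef, dif_pos h]
    exact hz _ (F.orderEmbOfFin_mem hF ⟨i, h⟩)
  set R : ℝ[X] := ∏ i ∈ Finset.range N, (X - C (z i)) with hR
  have hfac : P = C c * R := by
    have hRmonic : R.Monic := monic_prod_of_monic _ _ fun i _ => monic_X_sub_C (z i)
    have hRdeg : R.natDegree = N := by
      rw [hR, natDegree_prod _ _ fun i _ => X_sub_C_ne_zero (z i)]
      simp [natDegree_X_sub_C]
    set P₁ : ℝ[X] := C c⁻¹ * P with hP₁
    have hP₁deg : P₁.natDegree = N := by
      rw [hP₁, natDegree_C_mul (inv_ne_zero hc.ne')]; exact hdeg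
    have hP₁lc : P₁.leadingCoeff = 1 := by
      rw [hP₁, leadingCoeff_mul, leadingCoeff_C, hlc, inv_mul_cancel₀ hc.ne']
    have hP₁0 : P₁ ≠ 0 := leadingCoeff_ne_zero.mp (by rw [hP₁lc]; norm_num)
    have hkey : P₁ - R = 0 := by
      by_cases hWz : P₁ - R = 0
      · exact hWz
      exfalso
      have hdEq : P₁.degree = R.degree := by
        rw [degree_eq_natDegree hP₁0, degree_eq_natDegree hRmonic.ne_zero, hP₁deg, hRdeg]
      have hlcEq : P₁.leadingCoeff = R.leadingCoeff := by
        rw [hP₁lc, hRmonic.leadingCoeff]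
      have hdd : (P₁ - R).degree < (N : WithBot ℕ) := by
        have hdd' := degree_sub_lt hdEq hP₁0 hlcEq
        rwa [degree_eq_natDegree hP₁0, hP₁deg] at hdd'
      have hnd : (P₁ - R).natDegree < N := (natDegree_lt_iff_degree_lt hWz).2 hdd
      have hinj : Function.Injective (fun i : Fin N => z i) := by
        have hsm : StrictMono (fun i : Fin N => z i) := fun i j h => hzmono i j h j.isLt
        exact hsm.injective
      have hzero := eq_zero_of_natDegree_lt_card_of_eval_eq_zero (P₁ - R) hinj ?_ ?_
      · exact hWz hzero
      · intro i
        have h1 : P₁.eval (z i) = 0 := by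
          rw [hP₁, eval_mul, eval_C, hzroot i i.isLt, mul_zero]
        have h2 : R.eval (z i) = 0 := by
          rw [hR, eval_prod]
          exact Finset.prod_eq_zero (Finset.mem_range.2 i.isLt) (by simp)
        rw [eval_sub, h1, h2, sub_zero]
      · rw [Fintype.card_fin]; exact hnd
    have hPR : P₁ = R := sub_eq_zero.mp hkey
    calc P = C c * (C c⁻¹ * P) := by
            rw [← mul_assoc, ← Polynomial.C_mul, mul_inv_cancel₀ hc.ne', C_1, one_mul]
    _ = C c * R := by rw [← hP₁, hPR]
  have hPeval : ∀ w, P.eval w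
      = c * ∏ m ∈ Finset.range (n + 1), ((w - z (2 * m)) * (w - z (2 * m + 1))) := by
    intro w
    rw [hfac, eval_mul, eval_C, hR, eval_prod]
    congr 1
    calc ∏ i ∈ Finset.range N, (X - C (z i)).eval w
        = ∏ i ∈ Finset.range N, (w - z i) := Finset.prod_congr rfl (fun i _ => by simp)
    _ = ∏ m ∈ Finset.range (n + 1), ((w - z (2 * m)) * (w - z (2 * m + 1))) :=
        prod_pair (fun i => w - z i) (n + 1)
  refine ⟨fun i => z (2 * (i : ℕ)), fun i => z (2 * (i : ℕ) + 1), ?_, ?_, ?_⟩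
  · intro i
    exact (hzmono _ _ (by omega) (by have := i.isLt; omega)).le
  · intro i j hij
    have hij' : (i : ℕ) < (j : ℕ) := hij
    exact hzmono _ _ (by omega) (by have := j.isLt; omega)
  · intro w
    rw [hPeval w]
    constructor
    · intro hle
      by_contra hno
      push_neg at hno
      have hpos : ∀ m ∈ Finset.range (n + 1), 0 < (w - z (2 * m)) * (w - z (2 * m + 1)) := by
        intro m hm
        rw [Finset.mem_range] at hm
        have h2 : z (2 * m) < z (2 * m + 1) := hzmono _ _ (by omega) (by omega)
        rcases lt_or_ge w (z (2 * m)) with h | h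
        · exact mul_pos_of_neg_of_neg (by linarith) (by linarith)
        · have h3 : z (2 * m + 1) < w := hno ⟨m, hm⟩ h
          exact mul_pos (by linarith) (by linarith)
      have hprod := Finset.prod_pos hpos
      nlinarith [mul_pos hc hprod]
    · rintro ⟨i, h1, h2⟩
      have hmem : (i : ℕ) ∈ Finset.range (n + 1) := Finset.mem_range.2 i.isLt
      rw [← Finset.mul_prod_erase _ _ hmem]
      have hrest : 0 < ∏ m ∈ (Finset.range (n + 1)).erase (i : ℕ),
          ((w - z (2 * m)) * (w - z (2 * m + 1))) := by
        apply Finset.prod_pos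
        intro m hm
        have hm1 := Finset.mem_of_mem_erase hm
        rw [Finset.mem_range] at hm1
        have hne := Finset.ne_of_mem_erase hm
        have h2 : z (2 * m) < z (2 * m + 1) := hzmono _ _ (by omega) (by omega)
        rcases lt_or_gt_of_ne hne with h | h
        · have h4 : z (2 * m + 1) < z (2 * (i : ℕ)) :=
            hzmono _ _ (by omega) (by have := i.isLt; omega)
          exact mul_pos (by linarith) (by linarith)
        · have h4 : z (2 * (i : ℕ) + 1) < z (2 * m) := hzmono _ _ (by omega) (by omega)
          exact mul_pos_of_neg_of_neg (by linarith) (by linarith)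
      have hfi : (w - z (2 * (i : ℕ))) * (w - z (2 * (i : ℕ) + 1)) ≤ 0 :=
        mul_nonpos_iff.mpr (Or.inl ⟨by linarith, by linarith⟩)
      have h5 : (w - z (2 * (i : ℕ))) * (w - z (2 * (i : ℕ) + 1)) *
          (∏ m ∈ (Finset.range (n + 1)).erase (i : ℕ),
            ((w - z (2 * m)) * (w - z (2 * m + 1)))) ≤ 0 :=
        mul_nonpos_iff.mpr (Or.inr ⟨hfi, hrest.le⟩)
      exact mul_nonpos_iff.mpr (Or.inl ⟨hc.le, h5⟩)

/-! ### Building the finset of `2(l+1)` zeros from the alternation data -/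

lemma buildF {P Qp Ul : ℝ[X]} {l : ℕ} (hPU : ∀ x, P.eval x = Ul.eval x * Qp.eval x)
    (A : ℕ → ℝ) (hAdec : ∀ m, m + 1 ≤ l + 2 → A (m + 1) < A m)
    (hQA : ∀ k, k ≤ l + 2 → 0 < (-1 : ℝ) ^ k * Qp.eval (A k))
    (xr : ℕ → ℝ) (pos : ℕ → ℕ)
    (hposinj : ∀ k k', 1 ≤ k → k ≤ l → 1 ≤ k' → k' ≤ l → pos k = pos k' → k = k')
    (hpos : ∀ k, 1 ≤ k → k ≤ l → 1 ≤ pos k ∧ pos k ≤ l + 1 ∧ A (pos k) = xr k)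
    (hPxr : ∀ k, 1 ≤ k → k ≤ l → P.eval (xr k) = 0) :
    ∃ F : Finset ℝ, F.card = 2 * (l + 1) ∧ ∀ x ∈ F, P.eval x = 0 := by
  classical
  have hAmono : ∀ i j, i < j → j ≤ l + 2 → A j < A i := chain_dec hAdec
  have hAmono' : ∀ i j, i ≤ j → j ≤ l + 2 → A j ≤ A i := by
    intro i j hij hj
    rcases eq_or_lt_of_le hij with rfl | h
    · exact le_rfl
    · exact (hAmono i j h hj).le
  have hxi : ∀ j, j ≤ l + 1 → ∃ t, A (j + 1) < t ∧ t < A j ∧ Qp.eval t = 0 := by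
    intro j hj
    have h1 : 0 < (-1 : ℝ) ^ j * Qp.eval (A j) := hQA j (by omega)
    have h2 : 0 < (-1 : ℝ) ^ (j + 1) * Qp.eval (A (j + 1)) := hQA (j + 1) (by omega)
    have hle : A (j + 1) ≤ A j := (hAdec j (by omega)).le
    have hcont : ContinuousOn (fun x => (-1 : ℝ) ^ j * Qp.eval x) (Set.Icc (A (j + 1)) (A j)) :=
      (continuous_const.mul Qp.continuous).continuousOn
    have he2 : (-1 : ℝ) ^ (j + 1) * Qp.eval (A (j + 1))
        = -((-1 : ℝ) ^ j * Qp.eval (A (j + 1))) := by rw [pow_succ]; ring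
    rw [he2] at h2
    have h2' : (-1 : ℝ) ^ j * Qp.eval (A (j + 1)) < 0 := by linarith
    obtain ⟨t, ht, hteq⟩ := intermediate_value_Ioo hle hcont (Set.mem_Ioo.2 ⟨h2', h1⟩)
    refine ⟨t, ht.1, ht.2, ?_⟩
    rcases mul_eq_zero.mp hteq with h | h
    · exact absurd h (pow_ne_zero _ (by norm_num))
    · exact h
  choose! ξ hξ1 hξ2 hξ3 using hxi
  have hξdec : ∀ j j', j < j' → j' ≤ l + 1 → ξ j' < ξ j := by
    intro j j' h hj'
    have h1 : ξ j' < A j' := hξ2 j' hj'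
    have h2 : A (j + 1) < ξ j := hξ1 j (by omega)
    have h3 : A j' ≤ A (j + 1) := hAmono' (j + 1) j' (by omega) (by omega)
    linarith
  have hsep : ∀ k j, 1 ≤ k → k ≤ l → j ≤ l + 1 → xr k ≠ ξ j := by
    intro k j hk1 hk2 hj hEq
    obtain ⟨hp1, hp2, hpA⟩ := hpos k hk1 hk2
    have hAj : A (pos k) = ξ j := by rw [hpA, hEq]
    rcases le_or_gt (pos k) j with h | h
    · have h4 : A j ≤ A (pos k) := hAmono' _ _ h (by omega)
      have h5 : ξ j < A j := hξ2 j hj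
      linarith
    · have h4 : A (pos k) ≤ A (j + 1) := hAmono' (j + 1) (pos k) (by omega) (by omega)
      have h5 : A (j + 1) < ξ j := hξ1 j hj
      linarith
  classical
  refine ⟨(Finset.Icc 1 l).image xr ∪ (Finset.range (l + 2)).image ξ, ?_, ?_⟩
  · have hinj1 : Set.InjOn xr (Finset.Icc 1 l) := by
      intro a ha b hb hab
      rw [Finset.coe_Icc, Set.mem_Icc] at ha hb
      by_contra hne
      have hposne : pos a ≠ pos b := fun h => hne (hposinj a b ha.1 ha.2 hb.1 hb.2 h)
      obtain ⟨hpa1, hpa2, hpaA⟩ := hpos a ha.1 ha.2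
      obtain ⟨hpb1, hpb2, hpbA⟩ := hpos b hb.1 hb.2
      rcases lt_or_gt_of_ne hposne with h | h
      · have := hAmono _ _ h (by omega)
        rw [hpaA, hpbA] at this; linarith [hab.le, hab.ge]
      · have := hAmono _ _ h (by omega)
        rw [hpaA, hpbA] at this; linarith [hab.le, hab.ge]
    have hinj2 : Set.InjOn ξ (Finset.range (l + 2)) := by
      intro a ha b hb hab
      rw [Finset.coe_range, Set.mem_Iio] at ha hb
      by_contra hne
      rcases Nat.lt_or_ge a b with h | h
      · have := hξdec a b h (by omega); linarith [hab.le, hab.ge]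
      · have h' : b < a := by omega
        have := hξdec b a h' (by omega); linarith [hab.le, hab.ge]
    have hdisj : Disjoint ((Finset.Icc 1 l).image xr) ((Finset.range (l + 2)).image ξ) := by
      rw [Finset.disjoint_left]
      intro x hx1 hx2
      simp only [Finset.mem_image, Finset.mem_Icc, Finset.mem_range] at hx1 hx2
      obtain ⟨k, ⟨hk1, hk2⟩, hkx⟩ := hx1
      obtain ⟨j, hj, hjx⟩ := hx2
      exact hsep k j hk1 hk2 (by omega) (by rw [hkx, hjx])
    rw [Finset.card_union_of_disjoint hdisj, Finset.card_image_of_injOn hinj1,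
      Finset.card_image_of_injOn hinj2, Nat.card_Icc, Finset.card_range]
    omega
  · intro x hx
    rcases Finset.mem_union.mp hx with h | h
    · simp only [Finset.mem_image, Finset.mem_Icc] at h
      obtain ⟨k, ⟨hk1, hk2⟩, hkx⟩ := h
      rw [← hkx]
      exact hPxr k hk1 hk2
    · simp only [Finset.mem_image, Finset.mem_range] at h
      obtain ⟨j, hj, hjx⟩ := h
      rw [← hjx, hPU, hξ3 j (by omega), mul_zero]


lemma cos_aux (l a b : ℕ) (hab : a < b) (hbl : b ≤ l + 1) :
    Real.cos ((b : ℝ) * π / ((l : ℝ) + 1)) < Real.cos ((a : ℝ) * π / ((l : ℝ) + 1)) := by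
  have hl1pos : (0 : ℝ) < (l : ℝ) + 1 := by positivity
  have hpi := Real.pi_pos
  have hb : (b : ℝ) ≤ (l : ℝ) + 1 := by exact_mod_cast hbl
  have hab' : (a : ℝ) < (b : ℝ) := by exact_mod_cast hab
  have hma : (a : ℝ) * π / ((l : ℝ) + 1) ∈ Set.Icc 0 π := by
    constructor
    · positivity
    · rw [div_le_iff₀ hl1pos]; nlinarith
  have hmb : (b : ℝ) * π / ((l : ℝ) + 1) ∈ Set.Icc 0 π := by
    constructor
    · positivity
    · rw [div_le_iff₀ hl1pos]; nlinarith
  have hlt : (a : ℝ) * π / ((l : ℝ) + 1) < (b : ℝ) * π / ((l : ℝ) + 1) := by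
    rw [div_lt_div_iff₀ hl1pos hl1pos]
    nlinarith [mul_pos (mul_pos (sub_pos.2 hab') hpi) hl1pos]
  exact Real.strictAntiOn_cos hma hmb hlt

lemma main_bands (l : ℕ) (v : ℝ) (hv : v ≠ 0) :
    ∃ γ β : Fin (l + 1) → ℝ, (∀ i, γ i ≤ β i) ∧ (∀ i j : Fin (l + 1), i < j → β i < γ j) ∧
      ∀ w : ℝ,
        (((2 * T ℝ ((l : ℤ) + 1) - C v * U ℝ (l : ℤ)).eval w) ^ 2 - 4 ≤ 0 ↔
          ∃ i : Fin (l + 1), γ i ≤ w ∧ w ≤ β i) := by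
  classical
  set Tp : ℝ[X] := T ℝ ((l : ℤ) + 1) with hTp
  set Up : ℝ[X] := U ℝ (l : ℤ) with hUp
  set Dp : ℝ[X] := 2 * Tp - C v * Up with hDp
  set Qp : ℝ[X] := (4 * X ^ 2 + (C v) ^ 2 - 4) * Up - 4 * C v * Tp with hQp
  set P : ℝ[X] := Dp ^ 2 - 4 with hP
  clear_value P
  clear_value Qp
  clear_value Dp
  clear_value Up
  clear_value Tp
  obtain ⟨hUdeg, hUlc⟩ := U_deg l
  obtain ⟨hTdeg, hTlc⟩ := T_deg l
  rw [← hUp] at hUdeg hUlc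
  rw [← hTp] at hTdeg hTlc
  have hUne : Up ≠ 0 := leadingCoeff_ne_zero.mp (by rw [hUlc]; positivity)
  -- degrees
  have h2T : (2 * Tp : ℝ[X]) = C 2 * Tp := by rw [two_pol]
  have h2Tdeg : (2 * Tp).natDegree = l + 1 := by
    rw [h2T, natDegree_C_mul (two_ne_zero), hTdeg]
  have h2Tlc : (2 * Tp).leadingCoeff = 2 ^ (l + 1) := by
    rw [h2T, leadingCoeff_mul, leadingCoeff_C, hTlc]; ring
  have h2Tne : (2 * Tp : ℝ[X]) ≠ 0 := leadingCoeff_ne_zero.mp (by rw [h2Tlc]; positivity)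
  have hCvU : (C v * Up).natDegree ≤ l :=
    le_trans natDegree_mul_le (by rw [natDegree_C, hUdeg]; omega)
  have hDd := sub_deg_nat h2Tne (show (C v * Up).natDegree < (2 * Tp).natDegree by
    rw [h2Tdeg]; omega)
  rw [← hDp] at hDd
  have hDdeg : Dp.natDegree = l + 1 := by rw [hDd.1, h2Tdeg]
  have hDlc : Dp.leadingCoeff = 2 ^ (l + 1) := by rw [hDd.2, h2Tlc]
  have hDne : Dp ≠ 0 := leadingCoeff_ne_zero.mp (by rw [hDlc]; positivity)
  -- Qp degrees
  have hA4 : (4 * X ^ 2 + (C v) ^ 2 - 4 : ℝ[X]) = 4 * X ^ 2 - (4 - (C v) ^ 2) := by ring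
  have h4X : (4 * X ^ 2 : ℝ[X]) = C 4 * X ^ 2 := by rw [four_pol]
  have h4Xdeg : (4 * X ^ 2 : ℝ[X]).natDegree = 2 := by
    rw [h4X, natDegree_C_mul (by norm_num : (4 : ℝ) ≠ 0), natDegree_X_pow]
  have h4Xlc : (4 * X ^ 2 : ℝ[X]).leadingCoeff = 4 := by
    rw [h4X, leadingCoeff_mul, leadingCoeff_C, leadingCoeff_X_pow, mul_one]
  have h4Xne : (4 * X ^ 2 : ℝ[X]) ≠ 0 := leadingCoeff_ne_zero.mp (by rw [h4Xlc]; norm_num)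
  have hconstdeg : (4 - (C v) ^ 2 : ℝ[X]).natDegree = 0 := by
    have h1 : (4 - (C v) ^ 2 : ℝ[X]) = C (4 - v ^ 2) := by
      rw [four_pol, ← C_pow, ← C_sub]
    rw [h1, natDegree_C]
  have hA4d := sub_deg_nat h4Xne (show (4 - (C v) ^ 2 : ℝ[X]).natDegree < (4 * X ^ 2 : ℝ[X]).natDegree by rw [hconstdeg, h4Xdeg]; omega)
  rw [← hA4] at hA4d
  have hA4deg : (4 * X ^ 2 + (C v) ^ 2 - 4 : ℝ[X]).natDegree = 2 := by rw [hA4d.1, h4Xdeg]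
  have hA4lc : (4 * X ^ 2 + (C v) ^ 2 - 4 : ℝ[X]).leadingCoeff = 4 := by rw [hA4d.2, h4Xlc]
  have hA4ne : (4 * X ^ 2 + (C v) ^ 2 - 4 : ℝ[X]) ≠ 0 :=
    leadingCoeff_ne_zero.mp (by rw [hA4lc]; norm_num)
  have hQleftdeg : ((4 * X ^ 2 + (C v) ^ 2 - 4) * Up).natDegree = l + 2 := by
    rw [natDegree_mul hA4ne hUne, hA4deg, hUdeg]; omega
  have hQleftlc : ((4 * X ^ 2 + (C v) ^ 2 - 4) * Up).leadingCoeff = 4 * 2 ^ l := by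
    rw [leadingCoeff_mul, hA4lc, hUlc]
  have hQleftne : ((4 * X ^ 2 + (C v) ^ 2 - 4) * Up) ≠ 0 := mul_ne_zero hA4ne hUne
  have hQrightdeg : (4 * C v * Tp).natDegree ≤ l + 1 := by
    refine le_trans natDegree_mul_le ?_
    have h1 : (4 * C v : ℝ[X]).natDegree = 0 := by
      rw [four_pol, ← Polynomial.C_mul, natDegree_C]
    rw [h1, hTdeg]; omega
  have hQd := sub_deg_nat hQleftne (show (4 * C v * Tp).natDegree <
      ((4 * X ^ 2 + (C v) ^ 2 - 4) * Up).natDegree by rw [hQleftdeg]; omega)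
  rw [← hQp] at hQd
  have hQdeg : Qp.natDegree = l + 2 := by rw [hQd.1, hQleftdeg]
  have hQlc : Qp.leadingCoeff = 4 * 2 ^ l := by rw [hQd.2, hQleftlc]
  -- P degrees
  have hDsqdeg : (Dp ^ 2).natDegree = 2 * (l + 1) := by
    rw [natDegree_pow, hDdeg]
  have hDsqne : (Dp ^ 2 : ℝ[X]) ≠ 0 := pow_ne_zero _ hDne
  have hPd := sub_deg_nat hDsqne (show (4 : ℝ[X]).natDegree < (Dp ^ 2).natDegree by
    rw [natDegree_ofNat, hDsqdeg]; omega)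
  rw [← hP] at hPd
  have hPdeg : P.natDegree = 2 * (l + 1) := by rw [hPd.1, hDsqdeg]
  have hPlc : P.leadingCoeff = ((2 : ℝ) ^ (l + 1)) ^ 2 := by
    rw [hPd.2, leadingCoeff_pow, hDlc]
  -- factorization identity
  have hfact : P = Up * Qp := by
    rw [hP, hDp, hQp, hTp, hUp]
    linear_combination (4 : ℝ[X]) * pell l
  have hPU : ∀ x : ℝ, P.eval x = Up.eval x * Qp.eval x := by
    intro x; rw [hfact, eval_mul]
  have hPval : ∀ x : ℝ, P.eval x = (Dp.eval x) ^ 2 - 4 := by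
    intro x; rw [hP]; simp
  -- trigonometric data
  set xr : ℕ → ℝ := fun k => Real.cos ((k : ℝ) * π / ((l : ℝ) + 1)) with hxr
  clear_value xr
  have hl1pos : (0 : ℝ) < (l : ℝ) + 1 := by positivity
  have hUx : ∀ k, 1 ≤ k → k ≤ l → Up.eval (xr k) = 0 := by
    intro k h1 h2
    have hU := U_real_cos ((k : ℝ) * π / ((l : ℝ) + 1)) (l : ℤ)
    have harg : (((l : ℤ) : ℝ) + 1) * ((k : ℝ) * π / ((l : ℝ) + 1)) = (k : ℝ) * π := by
      push_cast
      field_simp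
    rw [harg, Real.sin_nat_mul_pi k] at hU
    have hsinne : Real.sin ((k : ℝ) * π / ((l : ℝ) + 1)) ≠ 0 := by
      apply ne_of_gt
      apply Real.sin_pos_of_pos_of_lt_pi
      · have hk : (0 : ℝ) < (k : ℝ) := by exact_mod_cast h1
        positivity
      · rw [div_lt_iff₀ hl1pos]
        have hk : (k : ℝ) ≤ (l : ℝ) := by exact_mod_cast h2
        have hmul := mul_lt_mul_of_pos_right (show (k : ℝ) < (l : ℝ) + 1 by linarith)
          Real.pi_pos
        linarith
    have hU0 : (U ℝ (l : ℤ)).eval (Real.cos ((k : ℝ) * π / ((l : ℝ) + 1))) = 0 := by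
      rcases mul_eq_zero.mp hU with h | h
      · exact h
      · exact absurd h hsinne
    simpa only [hUp, hxr] using hU0
  have hTx : ∀ k, 1 ≤ k → k ≤ l → Tp.eval (xr k) = (-1) ^ k := by
    intro k h1 h2
    have hT := T_real_cos ((k : ℝ) * π / ((l : ℝ) + 1)) ((l : ℤ) + 1)
    have harg : ((((l : ℤ) + 1) : ℤ) : ℝ) * ((k : ℝ) * π / ((l : ℝ) + 1)) = (k : ℝ) * π := by
      push_cast
      field_simp
    rw [harg] at hT
    have hcos : Real.cos ((k : ℝ) * π) = (-1) ^ k := by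
      have := Real.cos_nat_mul_pi_sub 0 k
      rwa [sub_zero, Real.cos_zero, mul_one] at this
    simpa only [hTp, hxr] using hT.trans hcos
  have hxrdec : ∀ a b, a < b → b ≤ l + 1 → xr b < xr a := by
    intro a b hab hbl
    simpa only [hxr] using cos_aux l a b hab hbl
  -- evaluation of the polynomials at the xr points
  have hDx : ∀ k, 1 ≤ k → k ≤ l → Dp.eval (xr k) = 2 * (-1) ^ k := by
    intro k h1 h2
    rw [hDp]
    simp only [eval_sub, eval_mul, eval_ofNat, eval_C]
    rw [hUx k h1 h2, hTx k h1 h2]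
    ring
  have hQx : ∀ k, 1 ≤ k → k ≤ l → Qp.eval (xr k) = -4 * v * (-1) ^ k := by
    intro k h1 h2
    rw [hQp]
    simp only [eval_sub, eval_mul, eval_add, eval_pow, eval_ofNat, eval_C, eval_X]
    rw [hUx k h1 h2, hTx k h1 h2]
    ring
  have hPx : ∀ k, 1 ≤ k → k ≤ l → P.eval (xr k) = 0 := by
    intro k h1 h2
    rw [hPval, hDx k h1 h2]
    have hsq : ((-1 : ℝ) ^ k) ^ 2 = 1 := by
      rw [← pow_mul, mul_comm, pow_mul]
      norm_num
    linear_combination (4 : ℝ) * hsq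
  -- all real zeros of Up are xr's
  have hUroot : ∀ y : ℝ, Up.eval y = 0 → ∃ k, 1 ≤ k ∧ k ≤ l ∧ xr k = y := by
    intro y hy
    by_contra hcon
    push_neg at hcon
    set f : Fin (l + 1) → ℝ := fun i => if h : (i : ℕ) < l then xr ((i : ℕ) + 1) else y with hf
    clear_value f
    have hinj : Function.Injective f := by
      intro a b hab
      simp only [hf] at hab
      by_cases ha : (a : ℕ) < l <;> by_cases hb : (b : ℕ) < l
      · rw [dif_pos ha, dif_pos hb] at hab
        by_contra hne
        have hne' : (a : ℕ) ≠ (b : ℕ) := fun h => hne (Fin.ext h)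
        rcases hne'.lt_or_gt with h | h
        · have := hxrdec ((a : ℕ) + 1) ((b : ℕ) + 1) (by omega) (by omega)
          linarith [hab.le, hab.ge]
        · have := hxrdec ((b : ℕ) + 1) ((a : ℕ) + 1) (by omega) (by omega)
          linarith [hab.le, hab.ge]
      · rw [dif_pos ha, dif_neg hb] at hab
        exact absurd hab (hcon ((a : ℕ) + 1) (by omega) (by omega))
      · rw [dif_neg ha, dif_pos hb] at hab
        exact absurd hab.symm (hcon ((b : ℕ) + 1) (by omega) (by omega))
      · apply Fin.ext
        have h1 : (a : ℕ) = l := by have := a.isLt; omega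
        have h2 : (b : ℕ) = l := by have := b.isLt; omega
        rw [h1, h2]
    have hroots : ∀ i, Up.eval (f i) = 0 := by
      intro i
      simp only [hf]
      split
      · exact hUx _ (by omega) (by omega)
      · exact hy
    have h0 := eq_zero_of_natDegree_lt_card_of_eval_eq_zero Up hinj hroots
      (by rw [hUdeg, Fintype.card_fin]; omega)
    exact hUne h0
  -- positivity of Up to the right of all xr's
  have hUposR : ∀ x : ℝ, (∀ k, 1 ≤ k → k ≤ l → xr k < x) → 0 < Up.eval x := by
    intro x hx
    rcases Nat.eq_zero_or_pos l with hl0 | hl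
    · subst hl0
      rw [hUp]
      norm_num
    by_contra hle
    push_neg at hle
    have hev := evT (p := Up) (by rw [hUdeg]; omega) (by rw [hUlc]; positivity)
    obtain ⟨M, hM1, hM2⟩ := (hev.and (eventually_ge_atTop x)).exists
    obtain ⟨y, hymem, hy0⟩ := intermediate_value_Icc hM2 Up.continuous.continuousOn
      (Set.mem_Icc.2 ⟨hle, hM1.le⟩)
    obtain ⟨k, hk1, hk2, hk3⟩ := hUroot y hy0
    have h4 := hx k hk1 hk2
    rw [hk3] at h4
    have := hymem.1
    linarith
  -- sign of Up to the left of all xr's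
  have hUposL : ∀ x : ℝ, (∀ k, 1 ≤ k → k ≤ l → x < xr k) →
      0 < (-1 : ℝ) ^ l * Up.eval x := by
    intro x hx
    rcases Nat.eq_zero_or_pos l with hl0 | hl
    · subst hl0
      rw [hUp]
      norm_num
    by_contra hle
    push_neg at hle
    have hev := evB (p := Up) (by rw [hUdeg]; omega) (by rw [hUlc]; positivity)
    rw [hUdeg] at hev
    obtain ⟨Nb, hN1, hN2⟩ := (hev.and (eventually_le_atBot x)).exists
    obtain ⟨y, hymem, hy0⟩ := intermediate_value_Icc' hN2
      ((continuous_const.mul Up.continuous).continuousOn)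
      (Set.mem_Icc.2 ⟨hle, hN1.le⟩)
    have hyy : Up.eval y = 0 := by
      rcases mul_eq_zero.mp hy0 with h | h
      · exact absurd h (pow_ne_zero _ (by norm_num))
      · exact h
    obtain ⟨k, hk1, hk2, hk3⟩ := hUroot y hyy
    have h4 := hx k hk1 hk2
    rw [hk3] at h4
    have := hymem.2
    linarith
  have hevQB := evB (p := Qp) (by rw [hQdeg]; omega) (by rw [hQlc]; positivity)
  rw [hQdeg] at hevQB
  have hevQT := evT (p := Qp) (by rw [hQdeg]; omega) (by rw [hQlc]; positivity)
  -- it suffices to produce 2(l+1) distinct real zeros of P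
  suffices hFz : ∃ F : Finset ℝ, F.card = 2 * (l + 1) ∧ ∀ x ∈ F, P.eval x = 0 by
    obtain ⟨F, hFc, hFr⟩ := hFz
    obtain ⟨γ, β, hγβ, hsepa, hiff⟩ := core (c := ((2 : ℝ) ^ (l + 1)) ^ 2) (by positivity)
      hPdeg hPlc F hFc hFr
    refine ⟨γ, β, hγβ, hsepa, fun w => ?_⟩
    rw [show (Dp.eval w) ^ 2 - 4 = P.eval w from (hPval w).symm]
    exact hiff w
  rcases lt_or_gt_of_ne hv with hvneg | hvpos
  · -- v < 0
    have hDbot := evB (p := Dp) (by rw [hDdeg]; omega) (by rw [hDlc]; positivity)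
    rw [hDdeg] at hDbot
    have hc0ex : ∃ c₀, (-1 : ℝ) ^ (l + 1) * Dp.eval c₀ < 0 ∧
        ∀ k, 1 ≤ k → k ≤ l → c₀ ≤ xr k := by
      rcases Nat.eq_zero_or_pos l with hl0 | hl
      · subst hl0
        refine ⟨0, ?_, by omega⟩
        have hD0 : Dp.eval 0 = -v := by
          rw [hDp, hUp, hTp]
          norm_num
        have hrw : (-1 : ℝ) ^ (0 + 1) * Dp.eval 0 = v := by rw [hD0]; norm_num
        rw [hrw]
        exact hvneg
      · refine ⟨xr l, ?_, fun k h1 h2 => ?_⟩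
        · rw [hDx l hl le_rfl]
          have hsq : ((-1 : ℝ) ^ l) ^ 2 = 1 := by
            rw [← pow_mul, mul_comm, pow_mul]; norm_num
          have he : (-1 : ℝ) ^ (l + 1) * (2 * (-1) ^ l) = -2 * ((-1 : ℝ) ^ l) ^ 2 := by
            rw [pow_succ]; ring
          rw [he, hsq]
          norm_num
        · rcases eq_or_lt_of_le h2 with rfl | h
          · exact le_rfl
          · exact (hxrdec k l h (by omega)).le
    obtain ⟨c₀, hc₀neg, hc₀le⟩ := hc0ex
    obtain ⟨N₂, hN₂1, hN₂2⟩ := (hDbot.and (eventually_lt_atBot c₀)).exists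
    obtain ⟨x₀, hx₀mem, hx₀g⟩ := intermediate_value_Ioo' hN₂2.le
      ((continuous_const.mul Dp.continuous).continuousOn)
      (Set.mem_Ioo.2 ⟨hc₀neg, hN₂1⟩)
    have hx₀ : Dp.eval x₀ = 0 := by
      rcases mul_eq_zero.mp hx₀g with h | h
      · exact absurd h (pow_ne_zero _ (by norm_num))
      · exact h
    have hx₀lt : ∀ k, 1 ≤ k → k ≤ l → x₀ < xr k := fun k h1 h2 =>
      lt_of_lt_of_le hx₀mem.2 (hc₀le k h1 h2)
    have hUx₀ : 0 < (-1 : ℝ) ^ l * Up.eval x₀ := hUposL x₀ hx₀lt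
    have hP₀ : Up.eval x₀ * Qp.eval x₀ = -4 := by
      rw [← hPU x₀, hPval, hx₀]
      norm_num
    have hQx₀ : 0 < (-1 : ℝ) ^ (l + 1) * Qp.eval x₀ := by
      have hsq : ((-1 : ℝ) ^ l) ^ 2 = 1 := by
        rw [← pow_mul, mul_comm, pow_mul]; norm_num
      have hmul : ((-1 : ℝ) ^ l * Up.eval x₀) * ((-1 : ℝ) ^ (l + 1) * Qp.eval x₀) = 4 := by
        have he : ((-1 : ℝ) ^ l * Up.eval x₀) * ((-1 : ℝ) ^ (l + 1) * Qp.eval x₀)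
            = -(((-1 : ℝ) ^ l) ^ 2) * (Up.eval x₀ * Qp.eval x₀) := by
          rw [pow_succ]; ring
        rw [he, hsq, hP₀]; ring
      by_contra hb
      push_neg at hb
      have hcontr := mul_nonpos_iff.mpr (Or.inl ⟨hUx₀.le, hb⟩)
      rw [hmul] at hcontr
      norm_num at hcontr
    obtain ⟨M, hM1, hM2⟩ := (hevQT.and (eventually_gt_atTop (max x₀ (xr 1)))).exists
    obtain ⟨Nn, hNn1, hNn2⟩ := (hevQB.and (eventually_lt_atBot x₀)).exists
    set A : ℕ → ℝ := fun k => if k = 0 then M else if k ≤ l then xr k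
      else if k = l + 1 then x₀ else Nn with hA
    clear_value A
    have hA0 : A 0 = M := by simp [hA]
    have hAmid : ∀ k, 1 ≤ k → k ≤ l → A k = xr k := by
      intro k h1 h2
      simp only [hA]
      rw [if_neg (by omega), if_pos h2]
    have hAx₀ : A (l + 1) = x₀ := by
      simp only [hA]
      rw [if_neg (by omega), if_neg (by omega)]
      simp
    have hAlast : A (l + 2) = Nn := by
      simp only [hA]
      rw [if_neg (by omega), if_neg (by omega), if_neg (by omega)]
    have hAdec : ∀ m, m + 1 ≤ l + 2 → A (m + 1) < A m := by
      intro m hm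
      rcases Nat.eq_zero_or_pos m with rfl | hm0
      · rw [hA0]
        rcases Nat.eq_zero_or_pos l with hl0 | hl
        · subst hl0
          rw [hAx₀]
          exact lt_of_le_of_lt (le_max_left _ _) hM2
        · rw [hAmid 1 le_rfl hl]
          exact lt_of_le_of_lt (le_max_right _ _) hM2
      by_cases h1 : m ≤ l - 1
      · have hl : 1 ≤ l := by omega
        rw [hAmid m hm0 (by omega), hAmid (m + 1) (by omega) (by omega)]
        exact hxrdec m (m + 1) (by omega) (by omega)
      · by_cases h2 : m = l
        · subst h2
          rw [hAx₀, hAmid m hm0 le_rfl]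
          exact hx₀lt m hm0 le_rfl
        · have h3 : m = l + 1 := by omega
          subst h3
          rw [hAlast, hAx₀]
          exact hNn2
    have hQA : ∀ k, k ≤ l + 2 → 0 < (-1 : ℝ) ^ k * Qp.eval (A k) := by
      intro k hk
      rcases Nat.eq_zero_or_pos k with rfl | hk0
      · rw [hA0]
        simpa using hM1
      by_cases h1 : k ≤ l
      · rw [hAmid k hk0 h1, hQx k hk0 h1]
        have hsq : ((-1 : ℝ) ^ k) ^ 2 = 1 := by
          rw [← pow_mul, mul_comm, pow_mul]; norm_num
        have he : (-1 : ℝ) ^ k * (-4 * v * (-1) ^ k) = -4 * v * ((-1 : ℝ) ^ k) ^ 2 := by ring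
        rw [he, hsq]
        have : (0:ℝ) < -4 * v := by linarith
        linarith
      · by_cases h2 : k = l + 1
        · subst h2
          rw [hAx₀]
          exact hQx₀
        · have h3 : k = l + 2 := by omega
          subst h3
          rw [hAlast]
          exact hNn1
    have hposf0 : ∀ k, 1 ≤ k → k ≤ l → 1 ≤ k ∧ k ≤ l + 1 ∧ A k = xr k := by
      intro k h1 h2
      exact ⟨h1, by omega, hAmid k h1 h2⟩
    exact buildF hPU A hAdec hQA xr (fun k => k) (fun k k' _ _ _ _ h => h) hposf0 hPx
  · -- v > 0
    have hc0ex : ∃ c₀, Dp.eval c₀ < 0 ∧ ∀ k, 1 ≤ k → k ≤ l → xr k ≤ c₀ := by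
      rcases Nat.eq_zero_or_pos l with hl0 | hl
      · subst hl0
        refine ⟨0, ?_, by omega⟩
        have hD0 : Dp.eval 0 = -v := by
          rw [hDp, hUp, hTp]
          norm_num
        rw [hD0]
        linarith
      · refine ⟨xr 1, ?_, fun k h1 h2 => ?_⟩
        · rw [hDx 1 le_rfl hl]
          norm_num
        · rcases eq_or_lt_of_le h1 with h | h
          · rw [← h]
          · exact (hxrdec 1 k h (by omega)).le
    obtain ⟨c₀, hc₀neg, hc₀ge⟩ := hc0ex
    have hDtop := evT (p := Dp) (by rw [hDdeg]; omega) (by rw [hDlc]; positivity)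
    obtain ⟨M, hM1, hM2, hM3⟩ := (hDtop.and (hevQT.and (eventually_gt_atTop c₀))).exists
    obtain ⟨x₀, hx₀mem, hx₀⟩ := intermediate_value_Ioo hM3.le Dp.continuous.continuousOn
      (Set.mem_Ioo.2 ⟨hc₀neg, hM1⟩)
    have hx₀gt : ∀ k, 1 ≤ k → k ≤ l → xr k < x₀ := fun k h1 h2 =>
      lt_of_le_of_lt (hc₀ge k h1 h2) hx₀mem.1
    have hx₀' : Dp.eval x₀ = 0 := hx₀
    have hUx₀ : 0 < Up.eval x₀ := hUposR x₀ hx₀gt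
    have hP₀ : Up.eval x₀ * Qp.eval x₀ = -4 := by
      rw [← hPU x₀, hPval, hx₀']
      norm_num
    have hQx₀ : Qp.eval x₀ < 0 := by
      by_contra hq
      push_neg at hq
      have hcontr := mul_nonneg hUx₀.le hq
      rw [hP₀] at hcontr
      norm_num at hcontr
    obtain ⟨Nn, hNn1, hNn2⟩ := (hevQB.and (eventually_lt_atBot (min x₀ (xr l)))).exists
    have hNnx₀ : Nn < x₀ := lt_of_lt_of_le hNn2 (min_le_left _ _)
    have hNnxr : ∀ k, 1 ≤ k → k ≤ l → Nn < xr k := by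
      intro k h1 h2
      have h3 : Nn < xr l := lt_of_lt_of_le hNn2 (min_le_right _ _)
      rcases eq_or_lt_of_le h2 with rfl | h
      · exact h3
      · exact h3.trans (hxrdec k l h (by omega))
    set A : ℕ → ℝ := fun k => if k = 0 then M else if k = 1 then x₀
      else if k ≤ l + 1 then xr (k - 1) else Nn with hA
    clear_value A
    have hA0 : A 0 = M := by simp [hA]
    have hA1 : A 1 = x₀ := by simp [hA]
    have hAmid : ∀ k, 2 ≤ k → k ≤ l + 1 → A k = xr (k - 1) := by
      intro k h1 h2
      simp only [hA]
      rw [if_neg (by omega), if_neg (by omega), if_pos h2]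
    have hAlast : A (l + 2) = Nn := by
      simp only [hA]
      rw [if_neg (by omega), if_neg (by omega), if_neg (by omega)]
    have hAdec : ∀ m, m + 1 ≤ l + 2 → A (m + 1) < A m := by
      intro m hm
      rcases Nat.eq_zero_or_pos m with rfl | hm0
      · rw [hA0, hA1]
        exact hx₀mem.2
      by_cases h1 : m = 1
      · subst h1
        rcases Nat.eq_zero_or_pos l with hl0 | hl
        · subst hl0
          have hl2 : A 2 = Nn := by simpa using hAlast
          show A 2 < A 1
          rw [hl2, hA1]
          exact hNnx₀
        · rw [hA1, hAmid 2 le_rfl (by omega)]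
          exact hx₀gt 1 le_rfl hl
      by_cases h2 : m ≤ l
      · rw [hAmid m (by omega) (by omega), hAmid (m + 1) (by omega) (by omega)]
        have := hxrdec (m - 1) m (by omega) (by omega)
        rw [Nat.add_sub_cancel]
        exact this
      · have h3 : m = l + 1 := by omega
        subst h3
        rw [hAlast, hAmid (l + 1) (by omega) le_rfl]
        rw [Nat.add_sub_cancel]
        exact hNnxr l (by omega) le_rfl
    have hQA : ∀ k, k ≤ l + 2 → 0 < (-1 : ℝ) ^ k * Qp.eval (A k) := by
      intro k hk
      rcases Nat.eq_zero_or_pos k with rfl | hk0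
      · rw [hA0]
        simpa using hM2
      by_cases h1 : k = 1
      · subst h1
        rw [hA1]
        simpa using hQx₀
      by_cases h2 : k ≤ l + 1
      · rw [hAmid k (by omega) h2, hQx (k - 1) (by omega) (by omega)]
        have hsq : ((-1 : ℝ) ^ (k - 1)) ^ 2 = 1 := by
          rw [← pow_mul, mul_comm, pow_mul]; norm_num
        have hk' : (-1 : ℝ) ^ k = (-1) ^ (k - 1) * (-1) := by
          rw [← pow_succ]
          congr 1
          omega
        have he : (-1 : ℝ) ^ (k - 1) * (-1) * (-4 * v * (-1) ^ (k - 1))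
            = 4 * v * ((-1 : ℝ) ^ (k - 1)) ^ 2 := by ring
        rw [hk', he, hsq]
        have : (0:ℝ) < 4 * v := by linarith
        linarith
      · have h3 : k = l + 2 := by omega
        subst h3
        rw [hAlast]
        exact hNn1
    have hposinj1 : ∀ k k' : ℕ, 1 ≤ k → k ≤ l → 1 ≤ k' → k' ≤ l → k + 1 = k' + 1 → k = k' := by
      omega
    have hposf1 : ∀ k, 1 ≤ k → k ≤ l → 1 ≤ k + 1 ∧ k + 1 ≤ l + 1 ∧ A (k + 1) = xr k := by
      intro k h1 h2
      refine ⟨by omega, by omega, ?_⟩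
      have := hAmid (k + 1) (by omega) (by omega)
      rwa [Nat.add_sub_cancel] at this
    exact buildF hPU A hAdec hQA xr (fun k => k + 1) hposinj1 hposf1 hPx

end SparseBandsAux

theorem spectrum_L_bands (L : ℕ) (hL : 1 ≤ L) (v : ℝ) (hv : v ≠ 0) :
    ∃ γ β : Fin L → ℝ, (∀ i, γ i ≤ β i) ∧ (∀ i j : Fin L, i < j → β i < γ j) ∧
      {E : ℝ | sparseDiscriminantReal L v E ∈ Set.Icc (-2 : ℝ) 2}
        = ⋃ i : Fin L, Set.Icc (γ i) (β i) := by
  obtain ⟨l, rfl⟩ : ∃ l, L = l + 1 := ⟨L - 1, by omega⟩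
  obtain ⟨γ, β, h1, h2, h3⟩ := SparseBandsAux.main_bands l v hv
  refine ⟨fun i => 2 * γ i, fun i => 2 * β i, fun i => by dsimp only; linarith [h1 i],
    fun i j hij => by dsimp only; linarith [h2 i j hij], ?_⟩
  ext E
  simp only [Set.mem_setOf_eq, Set.mem_iUnion, Set.mem_Icc]
  have hrepr : sparseDiscriminantReal (l + 1) v E
      = (2 * Polynomial.Chebyshev.T ℝ ((l : ℤ) + 1)
          - C v * Polynomial.Chebyshev.U ℝ (l : ℤ)).eval (E / 2) := by
    unfold sparseDiscriminantReal
    have e1 : ((l + 1 : ℕ) : ℤ) = (l : ℤ) + 1 := by push_cast; ring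
    have e2 : ((l + 1 : ℕ) : ℤ) - 1 = (l : ℤ) := by push_cast; ring
    rw [e2, e1]
    simp [eval_sub, eval_mul]
  constructor
  · rintro ⟨hm1, hm2⟩
    have h4 : ((2 * Polynomial.Chebyshev.T ℝ ((l : ℤ) + 1)
        - C v * Polynomial.Chebyshev.U ℝ (l : ℤ)).eval (E / 2)) ^ 2 - 4 ≤ 0 := by
      rw [← hrepr]
      nlinarith
    obtain ⟨i, hi1, hi2⟩ := (h3 (E / 2)).mp h4
    exact ⟨i, by linarith, by linarith⟩
  · rintro ⟨i, hi1, hi2⟩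
    have h4 := (h3 (E / 2)).mpr ⟨i, by linarith, by linarith⟩
    rw [← hrepr] at h4
    constructor <;> nlinarith
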